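/- Let L be a field of characteristic not equal to 2, and let a_1, ..., a_k be elements of L with square roots α_1, ..., α_k in the algebraic closure of L. If for every nonempty subset I of {1,...,k} the product ∏_{s∈I} a_s is not a square in L, then the degree of the field extension L(α_1,...,α_k) over L equals 2^k. -/

import Mathlib

open IntermediateField Polynomial
universe u

set_option maxHeartbeats 1000000 in
set_option synthInstance.maxHeartbeats 400000 in
theorem multiquad_key {Ω : Type u} [Field Ω] : ∀ (k : ℕ) (L : Type u) [Field L] [Algebra L Ω],
    ringChar L ≠ 2 → ∀ (a : Fin k → L) (α : Fin k → Ω),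
    (∀ s, (α s) ^ 2 = algebraMap L Ω (a s)) →
    (∀ I : Finset (Fin k), I.Nonempty → ∀ x : L, x ^ 2 ≠ ∏ s ∈ I, a s) →
    Module.finrank L (adjoin L (Set.range α)) = 2 ^ k ∧
      ∀ x ∈ adjoin L (Set.range α), (∃ y : L, algebraMap L Ω y = x ^ 2) →
        ∃ (c : L) (I : Finset (Fin k)), x = algebraMap L Ω c * ∏ s ∈ I, α s := by
  intro k
  induction k with
  | zero =>
    intro L _ _ h2 a α hsq hns
    rw [Set.range_eq_empty, adjoin_empty]
    refine ⟨by simp [IntermediateField.finrank_bot], ?_⟩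
    intro x hx _
    obtain ⟨y, hy⟩ := IntermediateField.mem_bot.mp hx
    exact ⟨y, ∅, by simp [hy]⟩
  | succ k ih =>
    intro L _ _ h2 a α hsq hns
    set a' : Fin k → L := a ∘ Fin.castSucc with ha'
    set α' : Fin k → Ω := α ∘ Fin.castSucc with hα'
    have hns' : ∀ I : Finset (Fin k), I.Nonempty → ∀ x : L, x ^ 2 ≠ ∏ s ∈ I, a' s := by
      intro I hI x hx
      refine hns (I.map Fin.castSuccEmb) (hI.map) x ?_
      rwa [Finset.prod_map]
    obtain ⟨hK, hsqK⟩ := ih L h2 a' α' (fun s => hsq _) hns'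
    set K : IntermediateField L Ω := adjoin L (Set.range α') with hKdef
    set β : Ω := α (Fin.last k) with hβ
    set b : L := a (Fin.last k) with hb
    have hinj : Function.Injective (algebraMap L Ω) := (algebraMap L Ω).injective
    have hinjK : Function.Injective (algebraMap K Ω) := (algebraMap K Ω).injective
    have hinjLK : Function.Injective (algebraMap L K) := (algebraMap L K).injective
    have hβsq : β ^ 2 = algebraMap L Ω b := hsq _
    -- b is not a square in K
    have hbK : ∀ x : K, x ^ 2 ≠ algebraMap L K b := by
      intro x hx
      have hxΩ : (x : Ω) ^ 2 = algebraMap L Ω b := by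
        have := congrArg (algebraMap K Ω) hx
        simpa [map_pow, ← IsScalarTower.algebraMap_apply L K Ω] using this
      obtain ⟨c, I, hcI⟩ := hsqK (x : Ω) x.2 ⟨b, hxΩ.symm⟩
      have hprod : (∏ s ∈ I, α' s) ^ 2 = algebraMap L Ω (∏ s ∈ I, a' s) := by
        rw [← Finset.prod_pow, map_prod]
        exact Finset.prod_congr rfl fun s _ => hsq _
      have hb2 : b = c ^ 2 * ∏ s ∈ I, a' s := by
        apply hinj
        rw [← hxΩ, hcI, mul_pow, hprod, map_mul, map_pow]
      have hlast : Fin.last k ∉ I.map Fin.castSuccEmb := by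
        simp only [Finset.mem_map]
        rintro ⟨s, -, hs⟩
        exact (Fin.castSucc_lt_last s).ne hs
      refine hns (insert (Fin.last k) (I.map Fin.castSuccEmb)) (Finset.insert_nonempty _ _)
        (c * ∏ s ∈ I, a' s) ?_
      rw [Finset.prod_insert hlast, Finset.prod_map, mul_pow]
      show c ^ 2 * (∏ s ∈ I, a' s) ^ 2 = b * ∏ s ∈ I, a' s
      rw [hb2]
      ring
    have hb'' : β ^ 2 = algebraMap K Ω (algebraMap L K b) := by
      rw [hβsq, ← IsScalarTower.algebraMap_apply]
    -- characteristic of K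
    have h2K : ringChar K ≠ 2 := by
      haveI : CharP K (ringChar L) := charP_of_injective_algebraMap hinjLK (ringChar L)
      rw [ringChar.eq K (ringChar L)]; exact h2
    have htwo : (2 : K) ≠ 0 := Ring.two_ne_zero h2K
    -- β is integral over K with minimal polynomial X^2 - C b
    set f : Polynomial K := X ^ 2 - C (algebraMap L K b) with hf
    have hfmonic : f.Monic := by
      exact monic_X_pow_sub_C _ (by norm_num)
    have hfeval : aeval β f = 0 := by
      rw [hf, map_sub, map_pow, aeval_X, aeval_C, hb'', sub_self]
    have hint : IsIntegral K β := ⟨f, hfmonic, hfeval⟩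
    have hirr : Irreducible f :=
      X_pow_sub_C_irreducible_of_prime Nat.prime_two (fun x hx => hbK x hx)
    have hmin : minpoly K β = f := (minpoly.eq_of_irreducible_of_monic hirr hfeval hfmonic).symm
    have hE2 : Module.finrank K (adjoin K {β}) = 2 := by
      rw [adjoin.finrank hint, hmin, hf, natDegree_X_pow_sub_C]
    have : FiniteDimensional L K := by
      rw [hKdef]
      haveI : Finite (Set.range α') := Set.finite_range α'
      apply IntermediateField.finiteDimensional_adjoin
      rintro x ⟨s, rfl⟩
      refine ⟨X ^ 2 - C (a' s), monic_X_pow_sub_C _ (by norm_num), ?_⟩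
      show aeval (α' s) (X ^ 2 - C (a' s)) = 0
      rw [map_sub, map_pow, aeval_X, aeval_C]
      show α' s ^ 2 - algebraMap L Ω (a' s) = 0
      rw [sub_eq_zero]
      exact hsq (Fin.castSucc s)
    have : FiniteDimensional K (adjoin K {β}) := adjoin.finiteDimensional hint
    -- decompose range α
    have hrange : Set.range α = Set.range α' ∪ {β} := by
      ext x
      constructor
      · rintro ⟨s, rfl⟩
        by_cases hs : s = Fin.last k
        · exact Or.inr (by simp [hs, hβ])
        · obtain ⟨t, rfl⟩ := Fin.exists_castSucc_eq.mpr hs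
          exact Or.inl ⟨t, rfl⟩
      · rintro (⟨s, rfl⟩ | rfl)
        · exact ⟨s.castSucc, rfl⟩
        · exact ⟨Fin.last k, rfl⟩
    have hadj : adjoin L (Set.range α) = (adjoin K {β}).restrictScalars L := by
      rw [hrange, ← adjoin_adjoin_left]
    constructor
    · rw [hadj]
      have hmul := Module.finrank_mul_finrank L K (adjoin K {β})
      show Module.finrank L (adjoin K {β}) = 2 ^ (k + 1)
      rw [← hmul, hK, hE2, pow_succ]
    · intro x hx hx2
      rw [hadj, mem_restrictScalars] at hx
      -- write x = u + v β
      obtain ⟨u, v, hxuv⟩ : ∃ u v : K, x = algebraMap K Ω u + algebraMap K Ω v * β := by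
        have hxsub : x ∈ Algebra.adjoin K ({β} : Set Ω) := by
          have := adjoin_simple_toSubalgebra_of_isAlgebraic hint.isAlgebraic
          rw [← this]
          exact hx
        rw [Algebra.adjoin_singleton_eq_range_aeval, AlgHom.mem_range] at hxsub
        obtain ⟨p, hp⟩ := hxsub
        set r : Polynomial K := p %ₘ f with hr
        have hxr : aeval β r = x := by
          conv_rhs => rw [← hp, ← modByMonic_add_div p f]
          simp only [map_add, map_mul, hfeval, zero_mul, add_zero]
          rfl
        have hdeg : r.natDegree ≤ 1 := by
          rcases eq_or_ne r 0 with h0 | h0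
          · simp [h0]
          · have hlt := degree_modByMonic_lt p hfmonic
            rw [← hr, hf, degree_X_pow_sub_C (by norm_num) _] at hlt
            exact Nat.lt_succ_iff.mp ((natDegree_lt_iff_degree_lt h0).mpr (by exact_mod_cast hlt))
        refine ⟨r.coeff 0, r.coeff 1, ?_⟩
        conv_lhs => rw [← hxr, eq_X_add_C_of_natDegree_le_one hdeg]
        rw [map_add, map_mul, aeval_X, aeval_C, aeval_C]
        ring
      -- linear independence of 1, β over K
      have hli : ∀ p q : K, algebraMap K Ω p + algebraMap K Ω q * β = 0 → p = 0 ∧ q = 0 := by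
        intro p q h
        by_cases hq : q = 0
        · subst hq
          simp only [map_zero, zero_mul, add_zero] at h
          exact ⟨hinjK (by simpa using h), rfl⟩
        · exfalso
          have hq' : algebraMap K Ω q ≠ 0 := fun hh => hq (hinjK (by rw [hh, map_zero]))
          have hβK : β = algebraMap K Ω (-p / q) := by
            rw [map_div₀, map_neg, eq_div_iff hq']
            linear_combination h
          refine hbK (-p / q) ?_
          apply hinjK
          rw [map_pow, ← hβK, hb'']
      obtain ⟨y, hy⟩ := hx2
      -- x^2 = (u^2 + v^2 b) + 2uv β
      have hx2eq : x ^ 2 = algebraMap K Ω (u ^ 2 + v ^ 2 * algebraMap L K b)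
          + algebraMap K Ω (2 * u * v) * β := by
        rw [hxuv]
        push_cast [map_add, map_mul, map_pow, map_ofNat]
        ring_nf
        rw [← hb'']
      have hzero : (u ^ 2 + v ^ 2 * algebraMap L K b - algebraMap L K y) = 0 ∧ 2 * u * v = 0 := by
        apply hli
        rw [map_sub, sub_add_eq_add_sub, ← hx2eq, ← hy, IsScalarTower.algebraMap_apply L K Ω,
          sub_self]
      have huv : u = 0 ∨ v = 0 := by
        rcases mul_eq_zero.mp hzero.2 with h | h
        · exact Or.inl ((mul_eq_zero.mp h).resolve_left htwo)
        · exact Or.inr h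
      rcases huv with hu | hv
      · -- x = v β
        subst hu
        have hxv : x = algebraMap K Ω v * β := by rw [hxuv]; simp
        have hb0 : b ≠ 0 := by
          intro h
          refine hns {Fin.last k} ⟨_, Finset.mem_singleton_self _⟩ 0 ?_
          simp [← hb, h]
        have hbΩ : algebraMap L Ω b ≠ 0 := fun hh => hb0 (hinj (by rw [hh, map_zero]))
        have hv2 : algebraMap K Ω (v ^ 2) = algebraMap L Ω (y * b⁻¹) := by
          have h1 : algebraMap K Ω (v ^ 2) * algebraMap L Ω b = algebraMap L Ω y := by
            rw [hy, hxv, mul_pow, hβsq, map_pow]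
          rw [map_mul, map_inv₀, eq_mul_inv_iff_mul_eq₀ hbΩ]
          exact h1
        obtain ⟨c, I, hcI⟩ := hsqK (v : Ω) v.2 ⟨y * b⁻¹, by rw [hv2.symm, map_pow]; rfl⟩
        have hlast : Fin.last k ∉ I.map Fin.castSuccEmb := by
          simp only [Finset.mem_map]
          rintro ⟨s, -, hs⟩
          exact (Fin.castSucc_lt_last s).ne hs
        refine ⟨c, insert (Fin.last k) (I.map Fin.castSuccEmb), ?_⟩
        rw [Finset.prod_insert hlast, Finset.prod_map, hxv]
        have hpm : ∏ x ∈ I, α (Fin.castSuccEmb x) = ∏ s ∈ I, α' s :=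
          Finset.prod_congr rfl fun s _ => rfl
        have : algebraMap K Ω v = (v : Ω) := rfl
        rw [this, hcI, hpm, ← hβ]
        ring
      · -- x = u ∈ K
        subst hv
        have hxu : x = (u : Ω) := by rw [hxuv]; simp
        obtain ⟨c, I, hcI⟩ := hsqK x (hxu ▸ u.2) ⟨y, hy⟩
        refine ⟨c, I.map Fin.castSuccEmb, ?_⟩
        have hpm : ∏ x ∈ I, α (Fin.castSuccEmb x) = ∏ s ∈ I, α' s :=
          Finset.prod_congr rfl fun s _ => rfl
        rw [Finset.prod_map, hpm, ← hcI, hxu]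

theorem multiquadratic_degree
    {L : Type*} [Field L] (h2 : ringChar L ≠ 2) (k : ℕ)
    (a : Fin k → L) (α : Fin k → AlgebraicClosure L)
    (hsq : ∀ s, (α s) ^ 2 = algebraMap L (AlgebraicClosure L) (a s))
    (hns : ∀ I : Finset (Fin k), I.Nonempty → ∀ x : L, x ^ 2 ≠ ∏ s ∈ I, a s) :
    Module.finrank L (IntermediateField.adjoin L (Set.range α)) = 2 ^ k := by
  exact (multiquad_key k L h2 a α hsq hns).1
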